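/- Suppose f : 2^[m] → ℝ≥0 is monotone submodular with f(∅) = 0. Define g(π) = Σ_{j=1}^m f(H^j(π)) for a permutation π, where H^j(π) = {i : π(i) ≤ j}. Then for the greedy ordering ALG (which on each step adds the element of maximum marginal gain), g(ALG) ≥ (Σ_{j=1}^m (1 − (1 − 1/m)^j)) / m · max_π g(π); in particular the greedy ordering is a (1/e)-approximation in the limit, since (1/m) Σ_{j=1}^m (1 − (1 − 1/m)^j) ≥ 1/e is approached from above as m → ∞. -/

import Mathlib

lemma submod_sum {m : ℕ} (f : Finset (Fin m) → ℝ)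
    (hmono : ∀ S T, S ⊆ T → f S ≤ f T)
    (hsub : ∀ S T, f S + f T ≥ f (S ∪ T) + f (S ∩ T)) :
    ∀ T S : Finset (Fin m), f (S ∪ T) - f S ≤ ∑ e ∈ T \ S, (f (insert e S) - f S) := by
  intro T
  induction T using Finset.induction with
  | empty => simp
  | @insert a T ha ih =>
    intro S
    by_cases haS : a ∈ S
    · have h1 : S ∪ insert a T = S ∪ T := by
        rw [Finset.union_insert, Finset.insert_eq_self.2 (Finset.mem_union_left T haS)]
      rw [h1, Finset.insert_sdiff_of_mem T haS]
      exact ih S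
    · have h1 : S ∪ insert a T = insert a (S ∪ T) := Finset.union_insert a S T
      have h2 : insert a T \ S = insert a (T \ S) := Finset.insert_sdiff_of_notMem T haS
      have haTS : a ∉ T \ S := fun h => ha (Finset.mem_sdiff.1 h).1
      rw [h1, h2, Finset.sum_insert haTS]
      have hu : insert a S ∪ (S ∪ T) = insert a (S ∪ T) := by
        rw [Finset.insert_union, ← Finset.union_assoc, Finset.union_self]
      have hi : S ⊆ insert a S ∩ (S ∪ T) := by
        intro x hx
        simp only [Finset.mem_inter, Finset.mem_insert, Finset.mem_union]
        exact ⟨Or.inr hx, Or.inl hx⟩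
      have h := hsub (insert a S) (S ∪ T)
      rw [hu] at h
      have h' := hmono S _ hi
      linarith [ih S]

/-- For `f : 2^[m] → ℝ≥0` monotone submodular with `f(∅) = 0` and
`g(π) = ∑_{j=1}^m f(H^j(π))`, the greedy ordering `ALG` satisfies
`g(ALG) ≥ ((∑_{j=1}^m (1 − (1 − 1/m)^j)) / m) · max_π g(π)`; moreover the factor
satisfies `(1/m) ∑_{j=1}^m (1 − (1 − 1/m)^j) ≥ 1/e`, so greedy is a
`1/e`-approximation. Here `H^j(π) = {i : π(i) ≤ j}` is modeled as
`{i : (π i : ℕ) < j}`, and greedy is modeled by its chain of sets `A j`. -/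
theorem greedy_ordering_approximation (m : ℕ) (hm : 0 < m)
    (f : Finset (Fin m) → ℝ)
    (hnonneg : ∀ S, 0 ≤ f S)
    (hmono : ∀ S T, S ⊆ T → f S ≤ f T)
    (hsub : ∀ S T, f S + f T ≥ f (S ∪ T) + f (S ∩ T))
    (hempty : f ∅ = 0)
    (A : ℕ → Finset (Fin m))
    (hA0 : A 0 = ∅)
    (hgreedy : ∀ j < m, ∃ e ∉ A j, A (j + 1) = insert e (A j) ∧
      ∀ e' ∉ A j, f (insert e' (A j)) ≤ f (insert e (A j))) :
    (1 / Real.exp 1 ≤ (∑ j ∈ Finset.Icc 1 m, (1 - (1 - 1 / (m : ℝ)) ^ j)) / m) ∧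
    ∀ π : Equiv.Perm (Fin m),
      (∑ j ∈ Finset.Icc 1 m, (1 - (1 - 1 / (m : ℝ)) ^ j)) / m *
          (∑ j ∈ Finset.Icc 1 m, f (Finset.univ.filter fun i => (π i : ℕ) < j)) ≤
        ∑ j ∈ Finset.Icc 1 m, f (A j) := by
  set M : ℝ := (m : ℝ) with hMdef
  set r : ℝ := 1 - 1 / M with hr
  have hM1 : 1 ≤ M := by rw [hMdef]; exact_mod_cast hm
  have hM0 : 0 < M := by linarith
  have hMne : M ≠ 0 := ne_of_gt hM0
  have hrM : M * r = M - 1 := by rw [hr]; field_simp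
  have hr0 : 0 ≤ r := by
    have h : 1 / M ≤ 1 := by rw [div_le_one hM0]; exact hM1
    rw [hr]; linarith
  have hr1 : r < 1 := by
    have h : 0 < 1 / M := by positivity
    rw [hr]; linarith
  clear_value M
  have hreq : r = 1 - 1 / M := hr
  clear_value r
  -- geometric sum identity
  have htot : ∑ j ∈ Finset.Icc 1 m, (1 - r ^ j) = 1 + M * r ^ (m + 1) := by
    have hG := geom_sum_mul r m
    set G : ℝ := ∑ i ∈ Finset.range m, r ^ i with hGdef
    have h2 : ∑ j ∈ Finset.Icc 1 m, r ^ j = r * G := by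
      rw [hGdef, Finset.mul_sum, ← Finset.Ico_add_one_right_eq_Icc, Finset.sum_Ico_eq_sum_range]
      simp [pow_add, pow_one, mul_comm]
    clear_value G
    have hG' : G = M * (1 - r ^ m) := by
      linear_combination (-M) * hG + G * hrM
    have h1 : ∑ j ∈ Finset.Icc 1 m, ((1:ℝ) - r ^ j) = M - ∑ j ∈ Finset.Icc 1 m, r ^ j := by
      rw [Finset.sum_sub_distrib, Finset.sum_const, Nat.card_Icc]
      simp [hMdef]
    rw [h1, h2, hG']
    linear_combination -hrM
  have hE2 : (2:ℝ) < Real.exp 1 := by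
    have := Real.exp_one_gt_d9; linarith
  have hE0 : (0:ℝ) < Real.exp 1 := Real.exp_pos 1
  constructor
  · -- 1/e bound
    rw [htot]
    by_cases hm1 : m = 1
    · subst hm1
      have hM1' : M = 1 := by rw [hMdef]; norm_num
      have hr' : r = 0 := by rw [hreq, hM1']; norm_num
      have hgoal : (1 + M * r ^ (1 + 1)) / M = 1 := by rw [hr', hM1']; norm_num
      rw [hgoal, div_le_one hE0]
      linarith
    · have hm2 : 2 ≤ m := by omega
      have hM2 : 2 ≤ M := by rw [hMdef]; exact_mod_cast hm2
      have hMm : (0:ℝ) < M - 1 := by linarith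
      have hM1ne : M - 1 ≠ 0 := ne_of_gt hMm
      have hinvpos : (0:ℝ) ≤ 1 + 1 / (M - 1) := by
        have : (0:ℝ) ≤ 1 / (M - 1) := div_nonneg (by norm_num) hMm.le
        linarith
      have hMm1 : ((m - 1 : ℕ) : ℝ) = M - 1 := by
        rw [hMdef]; push_cast [Nat.cast_sub hm]; ring
      have hinv : r * (1 + 1 / (M - 1)) = 1 := by
        rw [hreq]; field_simp; ring
      have hexp1 : (1 + 1 / (M - 1)) ^ (m - 1) ≤ Real.exp 1 := by
        calc (1 + 1 / (M - 1)) ^ (m - 1)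
            ≤ (Real.exp (1 / (M - 1))) ^ (m - 1) := by
              apply pow_le_pow_left₀ hinvpos (by linarith [Real.add_one_le_exp (1 / (M-1))])
          _ = Real.exp ((m - 1 : ℕ) * (1 / (M - 1))) := (Real.exp_nat_mul _ _).symm
          _ = Real.exp 1 := by
              congr 1
              rw [hMm1, mul_one_div, div_self hM1ne]
      have key : 1 ≤ Real.exp 1 * r ^ (m - 1) := by
        have h0 : r ^ (m - 1) * (1 + 1 / (M - 1)) ^ (m - 1) = 1 := by
          rw [← mul_pow, hinv, one_pow]
        calc (1:ℝ) = r ^ (m - 1) * (1 + 1 / (M - 1)) ^ (m - 1) := h0.symm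
          _ ≤ r ^ (m - 1) * Real.exp 1 := by
              apply mul_le_mul_of_nonneg_left hexp1 (pow_nonneg hr0 _)
          _ = Real.exp 1 * r ^ (m - 1) := by ring
      have hpow : r ^ (m + 1) = r ^ (m - 1) * r ^ 2 := by
        rw [← pow_add]; congr 1; omega
      rw [hpow, div_le_div_iff₀ hE0 hM0]
      have hMr2nn : (0:ℝ) ≤ M * r ^ 2 := mul_nonneg hM0.le (by positivity)
      have hint : M * r ^ 2 ≤ Real.exp 1 * r ^ (m - 1) * (M * r ^ 2) := by
        calc M * r ^ 2 = 1 * (M * r ^ 2) := (one_mul _).symm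
          _ ≤ Real.exp 1 * r ^ (m - 1) * (M * r ^ 2) :=
            mul_le_mul_of_nonneg_right key hMr2nn
      have hMr2 : M * r ^ 2 = M - 1 - r := by linear_combination (r + 1) * hrM
      nlinarith [hint, hMr2, hE2, hr0, hr1]
  · -- main greedy bound
    intro π
    set F : ℝ := f Finset.univ with hF
    have hFnn : 0 ≤ F := hnonneg _
    have step : ∀ j < m, M * (F - f (A (j + 1))) ≤ (M - 1) * (F - f (A j)) := by
      intro j hj
      obtain ⟨e, he, hA1, hmax⟩ := hgreedy j hj
      have hd0 : f (A j) ≤ f (A (j + 1)) := by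
        rw [hA1]; exact hmono _ _ (Finset.subset_insert e (A j))
      have hbd := submod_sum f hmono hsub Finset.univ (A j)
      rw [Finset.union_eq_right.mpr (Finset.subset_univ _)] at hbd
      have hterm : ∀ e' ∈ Finset.univ \ A j, f (insert e' (A j)) - f (A j) ≤ f (A (j+1)) - f (A j) := by
        intro e' he'
        have h := hmax e' (Finset.mem_sdiff.1 he').2
        rw [hA1]; linarith
      have hcard : (Finset.univ \ A j).card ≤ m := by
        calc (Finset.univ \ A j).card ≤ (Finset.univ : Finset (Fin m)).card :=
              Finset.card_le_card Finset.sdiff_subset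
          _ = m := by simp
      have hsum2 : ∑ e' ∈ Finset.univ \ A j, (f (insert e' (A j)) - f (A j))
          ≤ ((Finset.univ \ A j).card : ℝ) * (f (A (j+1)) - f (A j)) := by
        calc ∑ e' ∈ Finset.univ \ A j, (f (insert e' (A j)) - f (A j))
            ≤ ∑ _e' ∈ Finset.univ \ A j, (f (A (j+1)) - f (A j)) :=
              Finset.sum_le_sum hterm
          _ = ((Finset.univ \ A j).card : ℝ) * (f (A (j+1)) - f (A j)) := by
              rw [Finset.sum_const, nsmul_eq_mul]
      have hcard' : ((Finset.univ \ A j).card : ℝ) ≤ M := by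
        rw [hMdef]; exact_mod_cast hcard
      have h3 : ((Finset.univ \ A j).card : ℝ) * (f (A (j+1)) - f (A j))
          ≤ M * (f (A (j+1)) - f (A j)) :=
        mul_le_mul_of_nonneg_right hcard' (by linarith)
      have hfinal : F - f (A j) ≤ M * (f (A (j+1)) - f (A j)) := by
        rw [hF]; linarith
      nlinarith [hfinal]
    have hchain : ∀ j, j ≤ m → F - f (A j) ≤ r ^ j * F := by
      intro j
      induction j with
      | zero => intro _; simp [hA0, hempty]
      | succ j ih =>
        intro hj
        have hj' : j < m := by omega
        have h1 := step j hj'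
        have h2 := ih (le_of_lt hj')
        have h3 : (M - 1) * (F - f (A j)) ≤ (M - 1) * (r ^ j * F) :=
          mul_le_mul_of_nonneg_left h2 (by linarith)
        have h4 : (M - 1) * (r ^ j * F) = M * (r ^ (j+1) * F) := by
          linear_combination (-(r ^ j * F)) * hrM
        have h5 : M * (F - f (A (j+1))) ≤ M * (r ^ (j+1) * F) := by linarith
        exact le_of_mul_le_mul_left h5 hM0
    have hg : ∑ j ∈ Finset.Icc 1 m, f (Finset.univ.filter fun i => (π i : ℕ) < j) ≤ M * F := by
      calc ∑ j ∈ Finset.Icc 1 m, f (Finset.univ.filter fun i => (π i : ℕ) < j)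
          ≤ ∑ _j ∈ Finset.Icc 1 m, F :=
            Finset.sum_le_sum (fun j _ => hmono _ _ (Finset.subset_univ _))
        _ = M * F := by
            rw [Finset.sum_const, Nat.card_Icc, nsmul_eq_mul, hMdef]
            norm_num
    have hAlow : ∑ j ∈ Finset.Icc 1 m, (1 - r ^ j) * F ≤ ∑ j ∈ Finset.Icc 1 m, f (A j) := by
      apply Finset.sum_le_sum
      intro j hj
      have hjm : j ≤ m := (Finset.mem_Icc.1 hj).2
      have h := hchain j hjm
      nlinarith [h]
    have hfac0 : 0 ≤ ∑ j ∈ Finset.Icc 1 m, (1 - r ^ j) := by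
      apply Finset.sum_nonneg
      intro j _
      have : r ^ j ≤ 1 := pow_le_one₀ hr0 (le_of_lt hr1)
      linarith
    calc (∑ j ∈ Finset.Icc 1 m, (1 - r ^ j)) / M *
          (∑ j ∈ Finset.Icc 1 m, f (Finset.univ.filter fun i => (π i : ℕ) < j))
        ≤ (∑ j ∈ Finset.Icc 1 m, (1 - r ^ j)) / M * (M * F) := by
          apply mul_le_mul_of_nonneg_left hg (by positivity)
      _ = ∑ j ∈ Finset.Icc 1 m, (1 - r ^ j) * F := by
          rw [← Finset.sum_mul]
          field_simp
      _ ≤ ∑ j ∈ Finset.Icc 1 m, f (A j) := hAlow
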